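/- Let M > 1, c = 2/(1 + M⁻¹) = 2M/(M + 1), and let Θ₁, Θ₂ be defined by the piecewise formulas: Θ₁(θ) = sin(c⁻¹θ − π/4) on [0, cπ/2), Θ₁(θ) = cos(c⁻¹M(θ − cπ/2) − π/4) on [cπ/2, π), Θ₁(θ) = −sin(c⁻¹(θ − π) − π/4) on [π, π + cπ/2), Θ₁(θ) = −cos(c⁻¹M(θ − π − cπ/2) − π/4) on [π + cπ/2, 2π); and Θ₂(θ) = −cos(c⁻¹θ − π/4) on [0, cπ/2), Θ₂(θ) = sin(c⁻¹M(θ − cπ/2) − π/4) on [cπ/2, π), Θ₂(θ) = cos(c⁻¹(θ − π) − π/4) on [π, π + cπ/2), Θ₂(θ) = −sin(c⁻¹M(θ − π − cπ/2) − π/4) on [π + cπ/2, 2π), extended 2π-periodically to ℝ. Let k₀ : ℝ → ℝ be the 2π-periodic function with k₀(θ) = 1 for θ ∈ [0, cπ/2) ∪ [π, π + cπ/2) and k₀(θ) = M otherwise on [0, 2π). Then for every θ ∈ (0, 2π) with θ ∉ {cπ/2, π, π + cπ/2}, Θ₁ and Θ₂ are differentiable at θ and satisfy Θ₁′(θ)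 = −c⁻¹ k₀(θ) Θ₂(θ) and Θ₂′(θ) = c⁻¹ k₀(θ) Θ₁(θ). -/

import Mathlib

open Real Set

/-- Let `M > 1`, `c = 2M/(M+1)`, and let `Θ₁, Θ₂, k₀` be the
`2π`-periodic functions given by the stated piecewise formulas on `[0, 2π)`.
Then for every `θ ∈ (0, 2π)` with `θ ∉ {cπ/2, π, π + cπ/2}`, `Θ₁` and `Θ₂`
are differentiable at `θ` with `Θ₁′(θ) = −c⁻¹ k₀(θ) Θ₂(θ)` and
`Θ₂′(θ) = c⁻¹ k₀(θ) Θ₁(θ)`. -/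
theorem piecewise_system (M c : ℝ) (hM : 1 < M) (hc : c = 2 / (1 + M⁻¹))
    (Θ₁ Θ₂ k₀ : ℝ → ℝ)
    (hΘ₁per : Function.Periodic Θ₁ (2 * π))
    (hΘ₂per : Function.Periodic Θ₂ (2 * π))
    (hk₀per : Function.Periodic k₀ (2 * π))
    (hk₀1 : ∀ θ ∈ Ico 0 (c * π / 2) ∪ Ico π (π + c * π / 2), k₀ θ = 1)
    (hk₀M : ∀ θ ∈ Ico (0 : ℝ) (2 * π),
      θ ∉ Ico 0 (c * π / 2) ∪ Ico π (π + c * π / 2) → k₀ θ = M)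
    (hΘ₁a : ∀ θ ∈ Ico 0 (c * π / 2), Θ₁ θ = sin (c⁻¹ * θ - π / 4))
    (hΘ₁b : ∀ θ ∈ Ico (c * π / 2) π, Θ₁ θ = cos (c⁻¹ * M * (θ - c * π / 2) - π / 4))
    (hΘ₁c : ∀ θ ∈ Ico π (π + c * π / 2), Θ₁ θ = -sin (c⁻¹ * (θ - π) - π / 4))
    (hΘ₁d : ∀ θ ∈ Ico (π + c * π / 2) (2 * π),
      Θ₁ θ = -cos (c⁻¹ * M * (θ - π - c * π / 2) - π / 4))
    (hΘ₂a : ∀ θ ∈ Ico 0 (c * π / 2), Θ₂ θ = -cos (c⁻¹ * θ - π / 4))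
    (hΘ₂b : ∀ θ ∈ Ico (c * π / 2) π, Θ₂ θ = sin (c⁻¹ * M * (θ - c * π / 2) - π / 4))
    (hΘ₂c : ∀ θ ∈ Ico π (π + c * π / 2), Θ₂ θ = cos (c⁻¹ * (θ - π) - π / 4))
    (hΘ₂d : ∀ θ ∈ Ico (π + c * π / 2) (2 * π),
      Θ₂ θ = -sin (c⁻¹ * M * (θ - π - c * π / 2) - π / 4)) :
    ∀ θ ∈ Ioo (0 : ℝ) (2 * π), θ ≠ c * π / 2 → θ ≠ π → θ ≠ π + c * π / 2 →
      HasDerivAt Θ₁ (-(c⁻¹ * k₀ θ * Θ₂ θ)) θ ∧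
      HasDerivAt Θ₂ (c⁻¹ * k₀ θ * Θ₁ θ) θ := by
  have hM0 : (0:ℝ) < M := lt_trans one_pos hM
  have hMi : (0:ℝ) < M⁻¹ := inv_pos.mpr hM0
  have hc0 : 0 < c := by rw [hc]; positivity
  have hc2 : c < 2 := by
    rw [hc, div_lt_iff₀ (by linarith)]; linarith
  have hb1 : 0 < c * π / 2 := by positivity
  have hb2 : c * π / 2 < π := by nlinarith [pi_pos]
  intro θ hθ hne1 hne2 hne3
  obtain ⟨hθ0, hθ2π⟩ := hθ
  rcases lt_trichotomy θ (c * π / 2) with h1 | h1 | h1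
  · -- piece a
    have hmem : Ioo (0:ℝ) (c*π/2) ∈ nhds θ := Ioo_mem_nhds hθ0 h1
    have he1 : Θ₁ =ᶠ[nhds θ] fun x => sin (c⁻¹ * x - π/4) :=
      Filter.eventuallyEq_of_mem hmem fun x hx => hΘ₁a x ⟨hx.1.le, hx.2⟩
    have he2 : Θ₂ =ᶠ[nhds θ] fun x => -cos (c⁻¹ * x - π/4) :=
      Filter.eventuallyEq_of_mem hmem fun x hx => hΘ₂a x ⟨hx.1.le, hx.2⟩
    have hk : k₀ θ = 1 := hk₀1 θ (Or.inl ⟨hθ0.le, h1⟩)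
    have hT1 : Θ₁ θ = sin (c⁻¹ * θ - π/4) := hΘ₁a θ ⟨hθ0.le, h1⟩
    have hT2 : Θ₂ θ = -cos (c⁻¹ * θ - π/4) := hΘ₂a θ ⟨hθ0.le, h1⟩
    have hd : HasDerivAt (fun x : ℝ => c⁻¹ * x - π/4) c⁻¹ θ := by
      simpa using ((hasDerivAt_id θ).const_mul c⁻¹).sub_const (π/4)
    constructor
    · refine HasDerivAt.congr_of_eventuallyEq ?_ he1
      rw [hk, hT2]; exact hd.sin.congr_deriv (by ring)
    · refine HasDerivAt.congr_of_eventuallyEq ?_ he2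
      rw [hk, hT1]; exact hd.cos.neg.congr_deriv (by ring)
  · exact absurd h1 hne1
  rcases lt_trichotomy θ π with h2 | h2 | h2
  · -- piece b
    have hmem : Ioo (c*π/2) π ∈ nhds θ := Ioo_mem_nhds h1 h2
    have he1 : Θ₁ =ᶠ[nhds θ] fun x => cos (c⁻¹ * M * (x - c*π/2) - π/4) :=
      Filter.eventuallyEq_of_mem hmem fun x hx => hΘ₁b x ⟨hx.1.le, hx.2⟩
    have he2 : Θ₂ =ᶠ[nhds θ] fun x => sin (c⁻¹ * M * (x - c*π/2) - π/4) :=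
      Filter.eventuallyEq_of_mem hmem fun x hx => hΘ₂b x ⟨hx.1.le, hx.2⟩
    have hk : k₀ θ = M := by
      refine hk₀M θ ⟨hθ0.le, hθ2π⟩ ?_
      rintro (⟨_, h⟩ | ⟨h, _⟩)
      · exact absurd h (not_lt.mpr h1.le)
      · exact absurd h (not_le.mpr h2)
    have hT1 : Θ₁ θ = cos (c⁻¹ * M * (θ - c*π/2) - π/4) := hΘ₁b θ ⟨h1.le, h2⟩
    have hT2 : Θ₂ θ = sin (c⁻¹ * M * (θ - c*π/2) - π/4) := hΘ₂b θ ⟨h1.le, h2⟩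
    have hd : HasDerivAt (fun x : ℝ => c⁻¹ * M * (x - c*π/2) - π/4) (c⁻¹ * M) θ := by
      simpa using (((hasDerivAt_id θ).sub_const (c*π/2)).const_mul (c⁻¹*M)).sub_const (π/4)
    constructor
    · refine HasDerivAt.congr_of_eventuallyEq ?_ he1
      rw [hk, hT2]; exact hd.cos.congr_deriv (by ring)
    · refine HasDerivAt.congr_of_eventuallyEq ?_ he2
      rw [hk, hT1]; exact hd.sin.congr_deriv (by ring)
  · exact absurd h2 hne2
  rcases lt_trichotomy θ (π + c*π/2) with h3 | h3 | h3
  · -- piece c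
    have hmem : Ioo π (π + c*π/2) ∈ nhds θ := Ioo_mem_nhds h2 h3
    have he1 : Θ₁ =ᶠ[nhds θ] fun x => -sin (c⁻¹ * (x - π) - π/4) :=
      Filter.eventuallyEq_of_mem hmem fun x hx => hΘ₁c x ⟨hx.1.le, hx.2⟩
    have he2 : Θ₂ =ᶠ[nhds θ] fun x => cos (c⁻¹ * (x - π) - π/4) :=
      Filter.eventuallyEq_of_mem hmem fun x hx => hΘ₂c x ⟨hx.1.le, hx.2⟩
    have hk : k₀ θ = 1 := hk₀1 θ (Or.inr ⟨h2.le, h3⟩)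
    have hT1 : Θ₁ θ = -sin (c⁻¹ * (θ - π) - π/4) := hΘ₁c θ ⟨h2.le, h3⟩
    have hT2 : Θ₂ θ = cos (c⁻¹ * (θ - π) - π/4) := hΘ₂c θ ⟨h2.le, h3⟩
    have hd : HasDerivAt (fun x : ℝ => c⁻¹ * (x - π) - π/4) c⁻¹ θ := by
      simpa using (((hasDerivAt_id θ).sub_const π).const_mul c⁻¹).sub_const (π/4)
    constructor
    · refine HasDerivAt.congr_of_eventuallyEq ?_ he1
      rw [hk, hT2]; exact hd.sin.neg.congr_deriv (by ring)
    · refine HasDerivAt.congr_of_eventuallyEq ?_ he2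
      rw [hk, hT1]; exact hd.cos.congr_deriv (by ring)
  · exact absurd h3 hne3
  · -- piece d
    have hmem : Ioo (π + c*π/2) (2*π) ∈ nhds θ := Ioo_mem_nhds h3 hθ2π
    have he1 : Θ₁ =ᶠ[nhds θ] fun x => -cos (c⁻¹ * M * (x - π - c*π/2) - π/4) :=
      Filter.eventuallyEq_of_mem hmem fun x hx => hΘ₁d x ⟨hx.1.le, hx.2⟩
    have he2 : Θ₂ =ᶠ[nhds θ] fun x => -sin (c⁻¹ * M * (x - π - c*π/2) - π/4) :=
      Filter.eventuallyEq_of_mem hmem fun x hx => hΘ₂d x ⟨hx.1.le, hx.2⟩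
    have hk : k₀ θ = M := by
      refine hk₀M θ ⟨hθ0.le, hθ2π⟩ ?_
      rintro (⟨_, h⟩ | ⟨_, h⟩)
      · exact absurd h (not_lt.mpr (by linarith))
      · exact absurd h (not_lt.mpr h3.le)
    have hT1 : Θ₁ θ = -cos (c⁻¹ * M * (θ - π - c*π/2) - π/4) := hΘ₁d θ ⟨h3.le, hθ2π⟩
    have hT2 : Θ₂ θ = -sin (c⁻¹ * M * (θ - π - c*π/2) - π/4) := hΘ₂d θ ⟨h3.le, hθ2π⟩
    have hd : HasDerivAt (fun x : ℝ => c⁻¹ * M * (x - π - c*π/2) - π/4) (c⁻¹ * M) θ := by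
      simpa using (((((hasDerivAt_id θ).sub_const π).sub_const (c*π/2)).const_mul (c⁻¹*M)).sub_const (π/4))
    constructor
    · refine HasDerivAt.congr_of_eventuallyEq ?_ he1
      rw [hk, hT2]; exact hd.cos.neg.congr_deriv (by ring)
    · refine HasDerivAt.congr_of_eventuallyEq ?_ he2
      rw [hk, hT1]; exact hd.sin.neg.congr_deriv (by ring)
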